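/- For block sizes (1,2,2,1) (so n = 6), the rational function B = (L_{(2,4)} L_{(4,6)}) / (M_{(1,2)} M_{(5,6)} M_{(2,5)}) with L_{(2,4)} = x_{1,2}x_{2,4} + x_{1,3}x_{3,4}, L_{(4,6)} = x_{3,4}x_{4,6} + x_{3,5}x_{5,6}, M_{(1,2)} = x_{1,2}, M_{(5,6)} = x_{5,6}, M_{(2,5)} = det[[x_{2,4},x_{2,5}],[x_{3,4},x_{3,5}]] is invariant under conjugation by all invertible upper-triangular 6×6 matrices g (acting on the nilradical matrix X by X ↦ gXg^{-1}). -/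
import Mathlib

open Matrix

/-- Block map for the block sizes `(1,2,2,1)` of `gl(6)`: blocks `{1}, {2,3}, {4,5}, {6}`. -/
def blk6 (i : Fin 6) : ℕ :=
  if (i : ℕ) < 1 then 0 else if (i : ℕ) < 3 then 1 else if (i : ℕ) < 5 then 2 else 3

def L24 {K : Type*} [Field K] (X : Matrix (Fin 6) (Fin 6) K) : K :=
  X 0 1 * X 1 3 + X 0 2 * X 2 3

def L46 {K : Type*} [Field K] (X : Matrix (Fin 6) (Fin 6) K) : K :=
  X 2 3 * X 3 5 + X 2 4 * X 4 5

def M12 {K : Type*} [Field K] (X : Matrix (Fin 6) (Fin 6) K) : K := X 0 1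

def M56 {K : Type*} [Field K] (X : Matrix (Fin 6) (Fin 6) K) : K := X 4 5

def M25 {K : Type*} [Field K] (X : Matrix (Fin 6) (Fin 6) K) : K :=
  X 1 3 * X 2 4 - X 1 4 * X 2 3

/-- For block sizes `(1,2,2,1)`, the rational function
`B = (L_{(2,4)} L_{(4,6)}) / (M_{(1,2)} M_{(5,6)} M_{(2,5)})` is invariant under
conjugation of the nilradical matrix `X` by any invertible upper-triangular matrix. -/
theorem B_46_B_invariant {K : Type*} [Field K] [CharZero K]
    (X g : Matrix (Fin 6) (Fin 6) K)
    (hX : ∀ a b : Fin 6, ¬ blk6 a < blk6 b → X a b = 0)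
    (hg : ∀ a b : Fin 6, b < a → g a b = 0) (hgdet : IsUnit g.det)
    (hden : M12 X * M56 X * M25 X ≠ 0) :
    L24 (g * X * g⁻¹) * L46 (g * X * g⁻¹) /
      (M12 (g * X * g⁻¹) * M56 (g * X * g⁻¹) * M25 (g * X * g⁻¹))
      = L24 X * L46 X / (M12 X * M56 X * M25 X) := by
  have hGinv : Invertible g := g.invertibleOfIsUnitDet hgdet
  have hgt : BlockTriangular g id := fun a b hab => hg a b hab
  have hinvt : BlockTriangular g⁻¹ id := blockTriangular_inv_of_blockTriangular hgt
  have hinv : ∀ {a b : Fin 6}, b < a → g⁻¹ a b = 0 := fun hab => hinvt hab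
  have hgh : g * g⁻¹ = 1 := mul_nonsing_inv g hgdet
  have hhg : g⁻¹ * g = 1 := nonsing_inv_mul g hgdet
  have x00 : X 0 0 = 0 := hX 0 0 (by decide)
  have x10 : X 1 0 = 0 := hX 1 0 (by decide)
  have g10 : g 1 0 = 0 := hg 1 0 (by decide)
  have h10 : g⁻¹ 1 0 = 0 := hinv (by decide : (0:Fin 6) < 1)
  have x11 : X 1 1 = 0 := hX 1 1 (by decide)
  have x12 : X 1 2 = 0 := hX 1 2 (by decide)
  have x20 : X 2 0 = 0 := hX 2 0 (by decide)
  have g20 : g 2 0 = 0 := hg 2 0 (by decide)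
  have h20 : g⁻¹ 2 0 = 0 := hinv (by decide : (0:Fin 6) < 2)
  have x21 : X 2 1 = 0 := hX 2 1 (by decide)
  have g21 : g 2 1 = 0 := hg 2 1 (by decide)
  have h21 : g⁻¹ 2 1 = 0 := hinv (by decide : (1:Fin 6) < 2)
  have x22 : X 2 2 = 0 := hX 2 2 (by decide)
  have x30 : X 3 0 = 0 := hX 3 0 (by decide)
  have g30 : g 3 0 = 0 := hg 3 0 (by decide)
  have h30 : g⁻¹ 3 0 = 0 := hinv (by decide : (0:Fin 6) < 3)
  have x31 : X 3 1 = 0 := hX 3 1 (by decide)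
  have g31 : g 3 1 = 0 := hg 3 1 (by decide)
  have h31 : g⁻¹ 3 1 = 0 := hinv (by decide : (1:Fin 6) < 3)
  have x32 : X 3 2 = 0 := hX 3 2 (by decide)
  have g32 : g 3 2 = 0 := hg 3 2 (by decide)
  have h32 : g⁻¹ 3 2 = 0 := hinv (by decide : (2:Fin 6) < 3)
  have x33 : X 3 3 = 0 := hX 3 3 (by decide)
  have x34 : X 3 4 = 0 := hX 3 4 (by decide)
  have x40 : X 4 0 = 0 := hX 4 0 (by decide)
  have g40 : g 4 0 = 0 := hg 4 0 (by decide)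
  have h40 : g⁻¹ 4 0 = 0 := hinv (by decide : (0:Fin 6) < 4)
  have x41 : X 4 1 = 0 := hX 4 1 (by decide)
  have g41 : g 4 1 = 0 := hg 4 1 (by decide)
  have h41 : g⁻¹ 4 1 = 0 := hinv (by decide : (1:Fin 6) < 4)
  have x42 : X 4 2 = 0 := hX 4 2 (by decide)
  have g42 : g 4 2 = 0 := hg 4 2 (by decide)
  have h42 : g⁻¹ 4 2 = 0 := hinv (by decide : (2:Fin 6) < 4)
  have x43 : X 4 3 = 0 := hX 4 3 (by decide)
  have g43 : g 4 3 = 0 := hg 4 3 (by decide)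
  have h43 : g⁻¹ 4 3 = 0 := hinv (by decide : (3:Fin 6) < 4)
  have x44 : X 4 4 = 0 := hX 4 4 (by decide)
  have x50 : X 5 0 = 0 := hX 5 0 (by decide)
  have g50 : g 5 0 = 0 := hg 5 0 (by decide)
  have h50 : g⁻¹ 5 0 = 0 := hinv (by decide : (0:Fin 6) < 5)
  have x51 : X 5 1 = 0 := hX 5 1 (by decide)
  have g51 : g 5 1 = 0 := hg 5 1 (by decide)
  have h51 : g⁻¹ 5 1 = 0 := hinv (by decide : (1:Fin 6) < 5)
  have x52 : X 5 2 = 0 := hX 5 2 (by decide)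
  have g52 : g 5 2 = 0 := hg 5 2 (by decide)
  have h52 : g⁻¹ 5 2 = 0 := hinv (by decide : (2:Fin 6) < 5)
  have x53 : X 5 3 = 0 := hX 5 3 (by decide)
  have g53 : g 5 3 = 0 := hg 5 3 (by decide)
  have h53 : g⁻¹ 5 3 = 0 := hinv (by decide : (3:Fin 6) < 5)
  have x54 : X 5 4 = 0 := hX 5 4 (by decide)
  have g54 : g 5 4 = 0 := hg 5 4 (by decide)
  have h54 : g⁻¹ 5 4 = 0 := hinv (by decide : (4:Fin 6) < 5)
  have x55 : X 5 5 = 0 := hX 5 5 (by decide)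
  have r0 : g 0 0 * g⁻¹ 0 0 = 1 := by
    have := congrFun (congrFun hgh 0) 0
    simpa [Matrix.mul_apply, Fin.sum_univ_six, x00, x10, g10, h10, x11, x12, x20, g20, h20, x21, g21, h21, x22, x30, g30, h30, x31, g31, h31, x32, g32, h32, x33, x34, x40, g40, h40, x41, g41, h41, x42, g42, h42, x43, g43, h43, x44, x50, g50, h50, x51, g51, h51, x52, g52, h52, x53, g53, h53, x54, g54, h54, x55] using this
  have r1 : g 1 1 * g⁻¹ 1 1 = 1 := by
    have := congrFun (congrFun hgh 1) 1
    simpa [Matrix.mul_apply, Fin.sum_univ_six, x00, x10, g10, h10, x11, x12, x20, g20, h20, x21, g21, h21, x22, x30, g30, h30, x31, g31, h31, x32, g32, h32, x33, x34, x40, g40, h40, x41, g41, h41, x42, g42, h42, x43, g43, h43, x44, x50, g50, h50, x51, g51, h51, x52, g52, h52, x53, g53, h53, x54, g54, h54, x55] using this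
  have r2 : g 2 2 * g⁻¹ 2 2 = 1 := by
    have := congrFun (congrFun hgh 2) 2
    simpa [Matrix.mul_apply, Fin.sum_univ_six, x00, x10, g10, h10, x11, x12, x20, g20, h20, x21, g21, h21, x22, x30, g30, h30, x31, g31, h31, x32, g32, h32, x33, x34, x40, g40, h40, x41, g41, h41, x42, g42, h42, x43, g43, h43, x44, x50, g50, h50, x51, g51, h51, x52, g52, h52, x53, g53, h53, x54, g54, h54, x55] using this
  have r3 : g 3 3 * g⁻¹ 3 3 = 1 := by
    have := congrFun (congrFun hgh 3) 3
    simpa [Matrix.mul_apply, Fin.sum_univ_six, x00, x10, g10, h10, x11, x12, x20, g20, h20, x21, g21, h21, x22, x30, g30, h30, x31, g31, h31, x32, g32, h32, x33, x34, x40, g40, h40, x41, g41, h41, x42, g42, h42, x43, g43, h43, x44, x50, g50, h50, x51, g51, h51, x52, g52, h52, x53, g53, h53, x54, g54, h54, x55] using this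
  have r4 : g 4 4 * g⁻¹ 4 4 = 1 := by
    have := congrFun (congrFun hgh 4) 4
    simpa [Matrix.mul_apply, Fin.sum_univ_six, x00, x10, g10, h10, x11, x12, x20, g20, h20, x21, g21, h21, x22, x30, g30, h30, x31, g31, h31, x32, g32, h32, x33, x34, x40, g40, h40, x41, g41, h41, x42, g42, h42, x43, g43, h43, x44, x50, g50, h50, x51, g51, h51, x52, g52, h52, x53, g53, h53, x54, g54, h54, x55] using this
  have r5 : g 5 5 * g⁻¹ 5 5 = 1 := by
    have := congrFun (congrFun hgh 5) 5
    simpa [Matrix.mul_apply, Fin.sum_univ_six, x00, x10, g10, h10, x11, x12, x20, g20, h20, x21, g21, h21, x22, x30, g30, h30, x31, g31, h31, x32, g32, h32, x33, x34, x40, g40, h40, x41, g41, h41, x42, g42, h42, x43, g43, h43, x44, x50, g50, h50, x51, g51, h51, x52, g52, h52, x53, g53, h53, x54, g54, h54, x55] using this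
  have s12 : g⁻¹ 1 1 * g 1 2 + g⁻¹ 1 2 * g 2 2 = 0 := by
    have := congrFun (congrFun hhg 1) 2
    simpa [Matrix.mul_apply, Fin.sum_univ_six, x00, x10, g10, h10, x11, x12, x20, g20, h20, x21, g21, h21, x22, x30, g30, h30, x31, g31, h31, x32, g32, h32, x33, x34, x40, g40, h40, x41, g41, h41, x42, g42, h42, x43, g43, h43, x44, x50, g50, h50, x51, g51, h51, x52, g52, h52, x53, g53, h53, x54, g54, h54, x55] using this
  have s34 : g⁻¹ 3 3 * g 3 4 + g⁻¹ 3 4 * g 4 4 = 0 := by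
    have := congrFun (congrFun hhg 3) 4
    simpa [Matrix.mul_apply, Fin.sum_univ_six, x00, x10, g10, h10, x11, x12, x20, g20, h20, x21, g21, h21, x22, x30, g30, h30, x31, g31, h31, x32, g32, h32, x33, x34, x40, g40, h40, x41, g41, h41, x42, g42, h42, x43, g43, h43, x44, x50, g50, h50, x51, g51, h51, x52, g52, h52, x53, g53, h53, x54, g54, h54, x55] using this
  have Y01 : (g * X * g⁻¹) 0 1 = g 0 0 * X 0 1 * g⁻¹ 1 1 := by
    simp only [Matrix.mul_apply, Fin.sum_univ_six]
    simp only [x00, x10, g10, h10, x11, x12, x20, g20, h20, x21, g21, h21, x22, x30, g30, h30, x31, g31, h31, x32, g32, h32, x33, x34, x40, g40, h40, x41, g41, h41, x42, g42, h42, x43, g43, h43, x44, x50, g50, h50, x51, g51, h51, x52, g52, h52, x53, g53, h53, x54, g54, h54, x55]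
    ring
  have Y02 : (g * X * g⁻¹) 0 2 = g 0 0 * X 0 1 * g⁻¹ 1 2 + g 0 0 * X 0 2 * g⁻¹ 2 2 := by
    simp only [Matrix.mul_apply, Fin.sum_univ_six]
    simp only [x00, x10, g10, h10, x11, x12, x20, g20, h20, x21, g21, h21, x22, x30, g30, h30, x31, g31, h31, x32, g32, h32, x33, x34, x40, g40, h40, x41, g41, h41, x42, g42, h42, x43, g43, h43, x44, x50, g50, h50, x51, g51, h51, x52, g52, h52, x53, g53, h53, x54, g54, h54, x55]
    ring
  have Y13 : (g * X * g⁻¹) 1 3 = g 1 1 * X 1 3 * g⁻¹ 3 3 + g 1 2 * X 2 3 * g⁻¹ 3 3 := by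
    simp only [Matrix.mul_apply, Fin.sum_univ_six]
    simp only [x00, x10, g10, h10, x11, x12, x20, g20, h20, x21, g21, h21, x22, x30, g30, h30, x31, g31, h31, x32, g32, h32, x33, x34, x40, g40, h40, x41, g41, h41, x42, g42, h42, x43, g43, h43, x44, x50, g50, h50, x51, g51, h51, x52, g52, h52, x53, g53, h53, x54, g54, h54, x55]
    ring
  have Y23 : (g * X * g⁻¹) 2 3 = g 2 2 * X 2 3 * g⁻¹ 3 3 := by
    simp only [Matrix.mul_apply, Fin.sum_univ_six]
    simp only [x00, x10, g10, h10, x11, x12, x20, g20, h20, x21, g21, h21, x22, x30, g30, h30, x31, g31, h31, x32, g32, h32, x33, x34, x40, g40, h40, x41, g41, h41, x42, g42, h42, x43, g43, h43, x44, x50, g50, h50, x51, g51, h51, x52, g52, h52, x53, g53, h53, x54, g54, h54, x55]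
    ring
  have Y14 : (g * X * g⁻¹) 1 4 = g 1 1 * X 1 3 * g⁻¹ 3 4 + g 1 1 * X 1 4 * g⁻¹ 4 4 + g 1 2 * X 2 3 * g⁻¹ 3 4 + g 1 2 * X 2 4 * g⁻¹ 4 4 := by
    simp only [Matrix.mul_apply, Fin.sum_univ_six]
    simp only [x00, x10, g10, h10, x11, x12, x20, g20, h20, x21, g21, h21, x22, x30, g30, h30, x31, g31, h31, x32, g32, h32, x33, x34, x40, g40, h40, x41, g41, h41, x42, g42, h42, x43, g43, h43, x44, x50, g50, h50, x51, g51, h51, x52, g52, h52, x53, g53, h53, x54, g54, h54, x55]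
    ring
  have Y24 : (g * X * g⁻¹) 2 4 = g 2 2 * X 2 3 * g⁻¹ 3 4 + g 2 2 * X 2 4 * g⁻¹ 4 4 := by
    simp only [Matrix.mul_apply, Fin.sum_univ_six]
    simp only [x00, x10, g10, h10, x11, x12, x20, g20, h20, x21, g21, h21, x22, x30, g30, h30, x31, g31, h31, x32, g32, h32, x33, x34, x40, g40, h40, x41, g41, h41, x42, g42, h42, x43, g43, h43, x44, x50, g50, h50, x51, g51, h51, x52, g52, h52, x53, g53, h53, x54, g54, h54, x55]
    ring
  have Y35 : (g * X * g⁻¹) 3 5 = g 3 3 * X 3 5 * g⁻¹ 5 5 + g 3 4 * X 4 5 * g⁻¹ 5 5 := by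
    simp only [Matrix.mul_apply, Fin.sum_univ_six]
    simp only [x00, x10, g10, h10, x11, x12, x20, g20, h20, x21, g21, h21, x22, x30, g30, h30, x31, g31, h31, x32, g32, h32, x33, x34, x40, g40, h40, x41, g41, h41, x42, g42, h42, x43, g43, h43, x44, x50, g50, h50, x51, g51, h51, x52, g52, h52, x53, g53, h53, x54, g54, h54, x55]
    ring
  have Y45 : (g * X * g⁻¹) 4 5 = g 4 4 * X 4 5 * g⁻¹ 5 5 := by
    simp only [Matrix.mul_apply, Fin.sum_univ_six]
    simp only [x00, x10, g10, h10, x11, x12, x20, g20, h20, x21, g21, h21, x22, x30, g30, h30, x31, g31, h31, x32, g32, h32, x33, x34, x40, g40, h40, x41, g41, h41, x42, g42, h42, x43, g43, h43, x44, x50, g50, h50, x51, g51, h51, x52, g52, h52, x53, g53, h53, x54, g54, h54, x55]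
    ring
  have c0 : g 0 0 ≠ 0 := left_ne_zero_of_mul_eq_one r0
  have c2 : g 2 2 ≠ 0 := left_ne_zero_of_mul_eq_one r2
  have c3 : g⁻¹ 3 3 ≠ 0 := right_ne_zero_of_mul_eq_one r3
  have c5 : g⁻¹ 5 5 ≠ 0 := right_ne_zero_of_mul_eq_one r5
  have e1 : L24 (g * X * g⁻¹) = (g 0 0 * g⁻¹ 3 3) * L24 X := by
    simp only [L24, Y01, Y02, Y13, Y23]
    linear_combination (g 0 0 * g⁻¹ 3 3 * X 0 1 * X 1 3) * r1 +
      (g 0 0 * g⁻¹ 3 3 * X 0 1 * X 2 3) * s12 +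
      (g 0 0 * g⁻¹ 3 3 * X 0 2 * X 2 3) * r2
  have e2 : L46 (g * X * g⁻¹) = (g 2 2 * g⁻¹ 5 5) * L46 X := by
    simp only [L46, Y23, Y24, Y35, Y45]
    linear_combination (g 2 2 * g⁻¹ 5 5 * X 2 3 * X 3 5) * r3 +
      (g 2 2 * g⁻¹ 5 5 * X 2 3 * X 4 5) * s34 +
      (g 2 2 * g⁻¹ 5 5 * X 2 4 * X 4 5) * r4
  have e3 : M12 (g * X * g⁻¹) * M56 (g * X * g⁻¹) * M25 (g * X * g⁻¹)
      = ((g 0 0 * g⁻¹ 3 3) * (g 2 2 * g⁻¹ 5 5)) * (M12 X * M56 X * M25 X) := by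
    simp only [M12, M56, M25, Y01, Y45, Y13, Y24, Y14, Y23]
    linear_combination (g 0 0 * g⁻¹ 3 3 * g 2 2 * g⁻¹ 5 5 *
        (X 0 1 * X 4 5 * (X 1 3 * X 2 4 - X 1 4 * X 2 3)) * (g 4 4 * g⁻¹ 4 4)) * r1 +
      (g 0 0 * g⁻¹ 3 3 * g 2 2 * g⁻¹ 5 5 *
        (X 0 1 * X 4 5 * (X 1 3 * X 2 4 - X 1 4 * X 2 3))) * r4
  rw [e1, e2, e3]
  have hc : (g 0 0 * g⁻¹ 3 3) * (g 2 2 * g⁻¹ 5 5) ≠ 0 :=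
    mul_ne_zero (mul_ne_zero c0 c3) (mul_ne_zero c2 c5)
  rw [show (g 0 0 * g⁻¹ 3 3) * L24 X * ((g 2 2 * g⁻¹ 5 5) * L46 X)
      = ((g 0 0 * g⁻¹ 3 3) * (g 2 2 * g⁻¹ 5 5)) * (L24 X * L46 X) by ring]
  exact mul_div_mul_left _ _ hc
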